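/- Let V be a bounded operator on a Hilbert space H with closed range such that ker(V') = ker(V) for the Cauchy dual V' = (V*)†, and suppose V is left-invertible with left inverse L = (V*V)⁻¹V*. Then H decomposes as H = (closed linear span of ⋃_{n≥0} Vⁿ(E)) ⊕ (⋂_{n≥0} (L*)ⁿ H) where E = H ⊖ V H; moreover ⋂_{n≥0}(L*)ⁿH = (⋁_{n≥0}Vⁿ E)⊥. -/

import Mathlib

open ContinuousLinearMap

variable {H : Type*} [NormedAddCommGroup H] [InnerProductSpace ℂ H] [CompleteSpace H]

/-- Wold-type decomposition for a left-invertible V with left inverse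
L = (V*V)⁻¹V*: H = [E]_V ⊕ R^∞(L*) with E = H ⊖ VH, and moreover
R^∞(L*) = ([E]_V)ᗮ. -/
theorem stmt13 (V T : H →L[ℂ] H)
    (hcl : IsClosed (LinearMap.range (V : H →ₗ[ℂ] H) : Set H))
    (hT₁ : T ∘L (adjoint V ∘L V) = 1) (hT₂ : (adjoint V ∘L V) ∘L T = 1)
    (hker : LinearMap.ker ((adjoint (T ∘L adjoint V) : H →L[ℂ] H) : H →ₗ[ℂ] H) = LinearMap.ker (V : H →ₗ[ℂ] H)) :
    IsCompl
      ((⨆ n : ℕ, Submodule.map ((V ^ n : H →L[ℂ] H) : H →ₗ[ℂ] H) ((LinearMap.range (V : H →ₗ[ℂ] H))ᗮ)).topologicalClosure)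
      (⨅ n : ℕ, LinearMap.range ((adjoint (T ∘L adjoint V) ^ n : H →L[ℂ] H) : H →ₗ[ℂ] H)) ∧
    (⨅ n : ℕ, LinearMap.range ((adjoint (T ∘L adjoint V) ^ n : H →L[ℂ] H) : H →ₗ[ℂ] H)) =
      ((⨆ n : ℕ, Submodule.map ((V ^ n : H →L[ℂ] H) : H →ₗ[ℂ] H) ((LinearMap.range (V : H →ₗ[ℂ] H))ᗮ)).topologicalClosure)ᗮ := by
  set W := adjoint (T ∘L adjoint V) with hWdef
  have hadj1 : (adjoint (1 : H →L[ℂ] H)) = 1 := by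
    rw [← star_eq_adjoint, star_one]
  have hWeq : W = V ∘L adjoint T := by
    rw [hWdef, adjoint_comp, adjoint_adjoint]
  -- T* ∘ (V*V) = 1
  have h1 : adjoint T ∘L (adjoint V ∘L V) = 1 := by
    have := congrArg adjoint hT₂
    rwa [adjoint_comp, adjoint_comp, adjoint_adjoint, hadj1] at this
  -- (V*V) ∘ T* = 1
  have h2 : (adjoint V ∘L V) ∘L adjoint T = 1 := by
    have := congrArg adjoint hT₁
    rwa [adjoint_comp, adjoint_comp, adjoint_adjoint, hadj1] at this
  -- V* ∘ W = 1
  have hVW : ∀ x, adjoint V (W x) = x := by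
    intro x
    have : (adjoint V ∘L W) x = (1 : H →L[ℂ] H) x := by
      rw [hWeq, ← comp_assoc, h2]
    simpa using this
  -- range W = range V
  have hrange : LinearMap.range (W : H →ₗ[ℂ] H) = LinearMap.range (V : H →ₗ[ℂ] H) := by
    apply le_antisymm
    · rintro _ ⟨y, rfl⟩
      exact ⟨adjoint T y, by rw [hWeq]; rfl⟩
    · rintro _ ⟨y, rfl⟩
      refine ⟨(adjoint V ∘L V) y, ?_⟩
      simp only [coe_coe]
      rw [hWeq, comp_apply, ← comp_apply (adjoint T), h1, ContinuousLinearMap.one_apply]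
  -- key induction
  have key : ∀ (n : ℕ) (x : H), x ∈ LinearMap.range ((W ^ n : H →L[ℂ] H) : H →ₗ[ℂ] H) ↔
      ∀ k < n, ((adjoint V) ^ k) x ∈ LinearMap.range (V : H →ₗ[ℂ] H) := by
    intro n
    induction n with
    | zero => intro x; simp
    | succ n ih =>
      intro x
      constructor
      · rintro ⟨y, rfl⟩ k hk
        match k with
        | 0 =>
          simp only [pow_zero, one_apply]
          rw [← hrange]
          exact ⟨(W ^ n) y, by rw [pow_succ']; rfl⟩
        | k + 1 =>
          have hx : ((adjoint V) ^ (k+1)) ((W ^ (n+1)) y)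
              = ((adjoint V) ^ k) ((W ^ n) y) := by
            rw [pow_succ (adjoint V), pow_succ' W, ContinuousLinearMap.mul_apply, ContinuousLinearMap.mul_apply, hVW]
          simp only [coe_coe]
          rw [hx]
          exact (ih ((W ^ n) y)).mp ⟨y, rfl⟩ k (by omega)
      · intro hx
        have h0 : x ∈ LinearMap.range (W : H →ₗ[ℂ] H) := by
          rw [hrange]
          simpa using hx 0 (Nat.succ_pos n)
        obtain ⟨z, rfl⟩ := h0
        have hz : z ∈ LinearMap.range ((W ^ n : H →L[ℂ] H) : H →ₗ[ℂ] H) := by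
          rw [ih]
          intro k hk
          have := hx (k + 1) (by omega)
          simp only [coe_coe] at this
          rwa [pow_succ (adjoint V), ContinuousLinearMap.mul_apply, hVW] at this
        obtain ⟨y, rfl⟩ := hz
        exact ⟨y, by rw [pow_succ']; rfl⟩
  -- adjoint of powers
  have hadjpow : ∀ n : ℕ, adjoint (V ^ n) = (adjoint V) ^ n := by
    intro n
    rw [← star_eq_adjoint, star_pow, star_eq_adjoint]
  have hEperp : ((LinearMap.range (V : H →ₗ[ℂ] H))ᗮ)ᗮ = LinearMap.range (V : H →ₗ[ℂ] H) := by
    rw [Submodule.orthogonal_orthogonal_eq_closure,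
      hcl.submodule_topologicalClosure_eq]
  -- the main identity
  have main : (⨅ n : ℕ, LinearMap.range ((W ^ n : H →L[ℂ] H) : H →ₗ[ℂ] H)) =
      ((⨆ n : ℕ, Submodule.map ((V ^ n : H →L[ℂ] H) : H →ₗ[ℂ] H) ((LinearMap.range (V : H →ₗ[ℂ] H))ᗮ)).topologicalClosure)ᗮ := by
    rw [← Submodule.orthogonal_orthogonal_eq_closure, Submodule.triorthogonal_eq_orthogonal,
      ← Submodule.iInf_orthogonal]
    ext x
    simp only [Submodule.mem_iInf]
    constructor
    · intro hx n
      rw [Submodule.mem_orthogonal]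
      rintro _ ⟨e, he, rfl⟩
      have hVn : ((adjoint V) ^ n) x ∈ LinearMap.range (V : H →ₗ[ℂ] H) := by
        have := (key (n+1) x).mp (hx (n+1)) n (by omega)
        exact this
      rw [coe_coe, ← ContinuousLinearMap.adjoint_inner_right, hadjpow]
      rw [← hEperp] at hVn
      exact (Submodule.mem_orthogonal _ _).mp hVn e he
    · intro hx n
      rw [key]
      intro k _
      rw [← hEperp, Submodule.mem_orthogonal]
      intro e he
      have := (Submodule.mem_orthogonal _ _).mp (hx k) ((V ^ k) e) ⟨e, he, rfl⟩
      rwa [← ContinuousLinearMap.adjoint_inner_right, hadjpow] at this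
  refine ⟨?_, main⟩
  rw [main]
  haveI : CompleteSpace
      ((⨆ n : ℕ, Submodule.map ((V ^ n : H →L[ℂ] H) : H →ₗ[ℂ] H) ((LinearMap.range (V : H →ₗ[ℂ] H))ᗮ)).topologicalClosure) :=
    (Submodule.isClosed_topologicalClosure _).completeSpace_coe
  exact Submodule.isCompl_orthogonal_of_hasOrthogonalProjection
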